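/- arXiv:2101.12243 — 2 statements merged into one kernel-verified Lean document; each statement's English description precedes it below -/
import Mathlib

section
/- Let f, g, m, s⁺, s⁻, μ₀⁺, C_p > 0 and let d ∈ ℝ. Define the 2×2 real matrix A with entries a₁₁ = ((m s⁺ + s⁻)/3) f³ + (m s⁺/2) f² g, a₁₂ = m s⁺ (f³/3 + f² g/2), a₂₁ = ((m s⁺ + s⁻)/2) f² g + m s⁺ f g² + (s⁺/(3μ₀⁺)) g³ + C_p g^(p+2) Φ'(d), a₂₂ = (m s⁺/2) f² g + m s⁺ f g² + (s⁺/(3μ₀⁺)) g³ + C_p g^(p+2) Φ'(d), where Φ'(d) = p |d|^(p-1) with p ≥ 1. Then det A = (m s⁻ s⁺/12) f⁴ g² + (s⁻ s⁺/(9μ₀⁺)) f³ g³ + (C_p s⁻/3) f³ g^(p+2) Φ'(d), and in particular det A > 0 when d ≠ 0, and det A > 0 also for d = 0 since the first two terms are positive. -/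
/-- Determinant of the principal-symbol matrix of the linearized two-phase
thin-film operator, and its positivity (normal ellipticity). -/
theorem symbol_matrix_det (f g m sp sm mu Cp p d : ℝ)
    (hf : 0 < f) (hg : 0 < g) (hm : 0 < m) (hsp : 0 < sp) (hsm : 0 < sm)
    (hmu : 0 < mu) (hCp : 0 < Cp) (hp : 1 ≤ p) :
    ∀ A : Matrix (Fin 2) (Fin 2) ℝ,
      A = !![((m * sp + sm) / 3) * f ^ 3 + (m * sp / 2) * f ^ 2 * g,
             m * sp * (f ^ 3 / 3 + f ^ 2 * g / 2);
             ((m * sp + sm) / 2) * f ^ 2 * g + m * sp * f * g ^ 2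
               + (sp / (3 * mu)) * g ^ 3 + Cp * g ^ (p + 2) * (p * |d| ^ (p - 1)),
             (m * sp / 2) * f ^ 2 * g + m * sp * f * g ^ 2
               + (sp / (3 * mu)) * g ^ 3 + Cp * g ^ (p + 2) * (p * |d| ^ (p - 1))] →
      A.det = (m * sm * sp / 12) * f ^ 4 * g ^ 2
            + (sm * sp / (9 * mu)) * f ^ 3 * g ^ 3
            + (Cp * sm / 3) * f ^ 3 * g ^ (p + 2) * (p * |d| ^ (p - 1))
        ∧ 0 < A.det := by
  intro A hA
  subst hA
  rw [Matrix.det_fin_two_of]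
  have hX : (0:ℝ) ≤ Cp * g ^ (p + 2) * (p * |d| ^ (p - 1)) := by
    have := Real.rpow_nonneg (abs_nonneg d) (p - 1)
    have := (Real.rpow_pos_of_pos hg (p + 2)).le
    positivity
  set X := Cp * g ^ (p + 2) * (p * |d| ^ (p - 1)) with hXdef
  have hdet : (((m * sp + sm) / 3) * f ^ 3 + (m * sp / 2) * f ^ 2 * g) *
        ((m * sp / 2) * f ^ 2 * g + m * sp * f * g ^ 2 + (sp / (3 * mu)) * g ^ 3 + X) -
      m * sp * (f ^ 3 / 3 + f ^ 2 * g / 2) *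
        (((m * sp + sm) / 2) * f ^ 2 * g + m * sp * f * g ^ 2 + (sp / (3 * mu)) * g ^ 3 + X)
      = (m * sm * sp / 12) * f ^ 4 * g ^ 2 + (sm * sp / (9 * mu)) * f ^ 3 * g ^ 3
        + (sm / 3) * f ^ 3 * X := by
    field_simp
    ring
  refine ⟨by rw [hdet, hXdef]; ring, ?_⟩
  rw [hdet]
  have h1 : 0 < (m * sm * sp / 12) * f ^ 4 * g ^ 2 := by positivity
  have h2 : 0 < (sm * sp / (9 * mu)) * f ^ 3 * g ^ 3 := by positivity
  have h3 : 0 ≤ (sm / 3) * f ^ 3 * X := by positivity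
  linarith
end

section
/- Let Ω ⊂ ℝ be a bounded interval, f, g ∈ C³(closure of Ω) with f > 0, g > 0 on the closure, f_x = g_x = 0 on ∂Ω, and suppose the dissipation D(f,g) = ∫_Ω [C_p g^(p+2) |(f+g)_{xxx}|^(p+1) + (s⁺/(3μ₀⁺)) g³ |(f+g)_{xxx}|² + f |(1/(2√(m s⁺))) f (s⁻ f_{xxx} + m s⁺ (f+g)_{xxx}) + √(m s⁺) g (f+g)_{xxx}|² + (1/(12 m s⁺)) f³ |s⁻ f_{xxx} + m s⁺ (f+g)_{xxx}|²] dx equals zero, where all constants C_p, s⁺, s⁻, m, μ₀⁺ are positive and p ≥ 1. Then f and g are constant functions on Ω. -/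
open Set MeasureTheory intervalIntegral

/-- A continuous nonnegative function on `[a,b]` with zero integral vanishes. -/
lemma zero_of_integral_zero {a b : ℝ} (hab : a < b) {h : ℝ → ℝ}
    (hc : ContinuousOn h (Set.Icc a b))
    (hnn : ∀ x ∈ Set.Icc a b, 0 ≤ h x)
    (hint : (∫ x in a..b, h x) = 0) :
    ∀ x ∈ Set.Icc a b, h x = 0 := by
  have hci : IntervalIntegrable h volume a b := by
    apply ContinuousOn.intervalIntegrable
    rwa [Set.uIcc_of_le hab.le]
  have hsub : ∀ x ∈ Set.Icc a b, IntervalIntegrable h volume a x ∧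
      IntervalIntegrable h volume x b := by
    intro x hx
    constructor
    · apply hci.mono_set
      rw [Set.uIcc_of_le hab.le, Set.uIcc_of_le hx.1]
      exact Set.Icc_subset_Icc le_rfl hx.2
    · apply hci.mono_set
      rw [Set.uIcc_of_le hab.le, Set.uIcc_of_le hx.2]
      exact Set.Icc_subset_Icc hx.1 le_rfl
  have hH : ∀ x ∈ Set.Icc a b, (∫ t in a..x, h t) = 0 := by
    intro x hx
    have h1 : 0 ≤ ∫ t in a..x, h t :=
      intervalIntegral.integral_nonneg hx.1
        (fun u hu => hnn u ⟨hu.1, hu.2.trans hx.2⟩)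
    have h2 : 0 ≤ ∫ t in x..b, h t :=
      intervalIntegral.integral_nonneg hx.2
        (fun u hu => hnn u ⟨hx.1.trans hu.1, hu.2⟩)
    have h3 : (∫ t in a..x, h t) + (∫ t in x..b, h t) = 0 := by
      rw [intervalIntegral.integral_add_adjacent_intervals (hsub x hx).1 (hsub x hx).2]
      exact hint
    linarith
  have hIoo : ∀ x ∈ Set.Ioo a b, h x = 0 := by
    intro x hx
    have hxI : x ∈ Set.Icc a b := Set.Ioo_subset_Icc_self hx
    have hca : ContinuousAt h x :=
      hc.continuousAt (Icc_mem_nhds hx.1 hx.2)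
    have hmeas : StronglyMeasurableAtFilter h (nhds x) :=
      ⟨Set.Ioo a b, (isOpen_Ioo).mem_nhds hx,
        ((hc.mono Set.Ioo_subset_Icc_self).aestronglyMeasurable measurableSet_Ioo)⟩
    have hd : HasDerivAt (fun u => ∫ t in a..u, h t) (h x) x :=
      intervalIntegral.integral_hasDerivAt_right (hsub x hxI).1 hmeas hca
    have hzero : (fun u => ∫ t in a..u, h t) =ᶠ[nhds x] fun _ => (0 : ℝ) := by
      filter_upwards [Icc_mem_nhds hx.1 hx.2] with u hu
      exact hH u hu
    have hd0 : HasDerivAt (fun u => ∫ t in a..u, h t) 0 x :=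
      (hasDerivAt_const x (0 : ℝ)).congr_of_eventuallyEq hzero
    exact hd.unique hd0
  intro x hx
  have hxcl : x ∈ closure (Set.Ioo a b) := by
    rw [closure_Ioo hab.ne]; exact hx
  have hmem : h x ∈ closure (h '' Set.Ioo a b) :=
    ((hc x hx).mono Set.Ioo_subset_Icc_self).mem_closure_image hxcl
  have himg : h '' Set.Ioo a b ⊆ {0} := by
    rintro _ ⟨u, hu, rfl⟩; simp [hIoo u hu]
  have hcl : closure (h '' Set.Ioo a b) ⊆ {0} := by
    simpa using closure_minimal himg isClosed_singleton
  simpa using hcl hmem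

/-- If the third iterated derivative vanishes on `[a,b]` and the first
derivative vanishes at both endpoints, the function is constant. -/
lemma flat_of_third_deriv_zero {a b : ℝ} (hab : a < b) {f : ℝ → ℝ}
    (hf : ContDiffOn ℝ 3 f (Set.Icc a b))
    (h3 : ∀ x ∈ Set.Icc a b, iteratedDerivWithin 3 f (Set.Icc a b) x = 0)
    (ha : derivWithin f (Set.Icc a b) a = 0)
    (hb : derivWithin f (Set.Icc a b) b = 0) :
    ∀ x ∈ Set.Icc a b, f x = f a := by
  have hs : UniqueDiffOn ℝ (Set.Icc a b) := uniqueDiffOn_Icc hab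
  set s := Set.Icc a b with hsdef
  have hmem_a : a ∈ s := Set.left_mem_Icc.2 hab.le
  have hmem_b : b ∈ s := Set.right_mem_Icc.2 hab.le
  set D1 := derivWithin f s with hD1
  set D2 := derivWithin D1 s with hD2
  have hfD1 : ContDiffOn ℝ 2 D1 s := hf.derivWithin hs (by norm_num)
  have hfD2 : ContDiffOn ℝ 1 D2 s := hfD1.derivWithin hs (by norm_num)
  have hdiffD2 : DifferentiableOn ℝ D2 s := hfD2.differentiableOn (by norm_num)
  have hdiffD1 : DifferentiableOn ℝ D1 s := hfD1.differentiableOn (by norm_num)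
  have hdifff : DifferentiableOn ℝ f s := hf.differentiableOn (by norm_num)
  have hiter : ∀ x ∈ s, iteratedDerivWithin 3 f s x = derivWithin D2 s x := by
    intro x hx
    rw [iteratedDerivWithin_eq_iterate]
    rfl
  have hD3 : ∀ x ∈ s, derivWithin D2 s x = 0 := fun x hx => (hiter x hx) ▸ h3 x hx
  have hconst2 : ∀ x ∈ s, D2 x = D2 a :=
    constant_of_derivWithin_zero hdiffD2
      (fun x hx => hD3 x (Set.Ico_subset_Icc_self hx))
  set c := D2 a with hc
  have hφdiff : DifferentiableOn ℝ (fun x => D1 x - c * x) s :=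
    hdiffD1.sub ((differentiable_id.const_mul c).differentiableOn)
  have hφderiv : ∀ x ∈ Set.Ico a b, derivWithin (fun y => D1 y - c * y) s x = 0 := by
    intro x hx
    have hxs : x ∈ s := Set.Ico_subset_Icc_self hx
    have hu := hs x hxs
    have hder : HasDerivWithinAt (fun y => D1 y - c * y) (D2 x - c * 1) s x :=
      ((hdiffD1 x hxs).hasDerivWithinAt).sub (((hasDerivAt_id x).const_mul c).hasDerivWithinAt)
    rw [hder.derivWithin hu, hconst2 x hxs]
    ring
  have hφconst := constant_of_derivWithin_zero hφdiff hφderiv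
  have hD1eq : ∀ x ∈ s, D1 x = c * (x - a) := by
    intro x hx
    have h1 := hφconst x hx
    simp only [ha] at h1
    nlinarith [h1]
  have hc0 : c = 0 := by
    have h2 := hD1eq b hmem_b
    rw [hb] at h2
    rcases mul_eq_zero.1 h2.symm with h | h
    · exact h
    · exact absurd (by linarith [sub_eq_zero.1 h] : b = a) hab.ne'
  have hD1zero : ∀ x ∈ Set.Ico a b, D1 x = 0 := by
    intro x hx
    rw [hD1eq x (Set.Ico_subset_Icc_self hx), hc0, zero_mul]
  exact constant_of_derivWithin_zero hdifff hD1zero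


/-- Characterisation of steady states (Corollary 5.2): if the dissipation
vanishes, the film heights are flat. -/
theorem steady_states_flat (a b m sp sm mu Cp p : ℝ) (hab : a < b)
    (hm : 0 < m) (hsp : 0 < sp) (hsm : 0 < sm) (hmu : 0 < mu)
    (hCp : 0 < Cp) (hp : 1 ≤ p)
    (f g : ℝ → ℝ)
    (hf : ContDiffOn ℝ 3 f (Set.Icc a b)) (hg : ContDiffOn ℝ 3 g (Set.Icc a b))
    (hfpos : ∀ x ∈ Set.Icc a b, 0 < f x) (hgpos : ∀ x ∈ Set.Icc a b, 0 < g x)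
    (hbfa : derivWithin f (Set.Icc a b) a = 0)
    (hbfb : derivWithin f (Set.Icc a b) b = 0)
    (hbga : derivWithin g (Set.Icc a b) a = 0)
    (hbgb : derivWithin g (Set.Icc a b) b = 0)
    (hD : (∫ x in a..b,
        (Cp * (g x) ^ (p + 2)
            * |iteratedDerivWithin 3 f (Set.Icc a b) x
                + iteratedDerivWithin 3 g (Set.Icc a b) x| ^ (p + 1)
          + (sp / (3 * mu)) * (g x) ^ 3
            * (iteratedDerivWithin 3 f (Set.Icc a b) x
                + iteratedDerivWithin 3 g (Set.Icc a b) x) ^ 2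
          + f x * ((1 / (2 * Real.sqrt (m * sp))) * f x
              * (sm * iteratedDerivWithin 3 f (Set.Icc a b) x
                  + m * sp * (iteratedDerivWithin 3 f (Set.Icc a b) x
                      + iteratedDerivWithin 3 g (Set.Icc a b) x))
              + Real.sqrt (m * sp) * g x
                * (iteratedDerivWithin 3 f (Set.Icc a b) x
                    + iteratedDerivWithin 3 g (Set.Icc a b) x)) ^ 2
          + (1 / (12 * m * sp)) * (f x) ^ 3
            * (sm * iteratedDerivWithin 3 f (Set.Icc a b) x
                + m * sp * (iteratedDerivWithin 3 f (Set.Icc a b) x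
                    + iteratedDerivWithin 3 g (Set.Icc a b) x)) ^ 2)) = 0) :
    ∀ x ∈ Set.Icc a b, ∀ y ∈ Set.Icc a b, f x = f y ∧ g x = g y := by
  have hs : UniqueDiffOn ℝ (Set.Icc a b) := uniqueDiffOn_Icc hab
  set F3 := iteratedDerivWithin 3 f (Set.Icc a b) with hF3def
  set G3 := iteratedDerivWithin 3 g (Set.Icc a b) with hG3def
  set H : ℝ → ℝ := fun x =>
      Cp * (g x) ^ (p + 2) * |F3 x + G3 x| ^ (p + 1)
      + (sp / (3 * mu)) * (g x) ^ 3 * (F3 x + G3 x) ^ 2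
      + f x * ((1 / (2 * Real.sqrt (m * sp))) * f x
            * (sm * F3 x + m * sp * (F3 x + G3 x))
          + Real.sqrt (m * sp) * g x * (F3 x + G3 x)) ^ 2
      + (1 / (12 * m * sp)) * (f x) ^ 3
          * (sm * F3 x + m * sp * (F3 x + G3 x)) ^ 2 with hHdef
  -- continuity of the integrand
  have hcf : ContinuousOn f (Set.Icc a b) := hf.continuousOn
  have hcg : ContinuousOn g (Set.Icc a b) := hg.continuousOn
  have hcF3 : ContinuousOn F3 (Set.Icc a b) :=
    hf.continuousOn_iteratedDerivWithin (by norm_num) hs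
  have hcG3 : ContinuousOn G3 (Set.Icc a b) :=
    hg.continuousOn_iteratedDerivWithin (by norm_num) hs
  have hcsum : ContinuousOn (fun x => F3 x + G3 x) (Set.Icc a b) := hcF3.add hcG3
  have hclin : ContinuousOn (fun x => sm * F3 x + m * sp * (F3 x + G3 x)) (Set.Icc a b) :=
    (continuousOn_const.mul hcF3).add (continuousOn_const.mul hcsum)
  have hcH : ContinuousOn H (Set.Icc a b) := by
    apply ContinuousOn.add
    apply ContinuousOn.add
    apply ContinuousOn.add
    · exact (continuousOn_const.mul (hcg.rpow_const
        (fun x hx => Or.inl (hgpos x hx).ne'))).mul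
        (hcsum.abs.rpow_const (fun x hx => Or.inr (by linarith)))
    · exact (continuousOn_const.mul (hcg.pow 3)).mul (hcsum.pow 2)
    · exact hcf.mul ((((continuousOn_const.mul hcf).mul hclin).add
        ((continuousOn_const.mul hcg).mul hcsum)).pow 2)
    · exact ((continuousOn_const.mul (hcf.pow 3)).mul (hclin.pow 2))
  -- pointwise nonnegativity of the four terms
  have ht1 : ∀ z ∈ Set.Icc a b, 0 ≤ Cp * (g z) ^ (p + 2) * |F3 z + G3 z| ^ (p + 1) := by
    intro z hz
    exact mul_nonneg (mul_nonneg hCp.le (Real.rpow_nonneg (hgpos z hz).le _))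
      (Real.rpow_nonneg (abs_nonneg _) _)
  have ht2 : ∀ z ∈ Set.Icc a b, 0 ≤ (sp / (3 * mu)) * (g z) ^ 3 * (F3 z + G3 z) ^ 2 := by
    intro z hz
    have : (0:ℝ) ≤ sp / (3 * mu) := by positivity
    exact mul_nonneg (mul_nonneg this (pow_nonneg (hgpos z hz).le 3)) (sq_nonneg _)
  have ht3 : ∀ z ∈ Set.Icc a b, 0 ≤ f z * ((1 / (2 * Real.sqrt (m * sp))) * f z
      * (sm * F3 z + m * sp * (F3 z + G3 z))
      + Real.sqrt (m * sp) * g z * (F3 z + G3 z)) ^ 2 := by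
    intro z hz
    exact mul_nonneg (hfpos z hz).le (sq_nonneg _)
  have ht4 : ∀ z ∈ Set.Icc a b, 0 ≤ (1 / (12 * m * sp)) * (f z) ^ 3
      * (sm * F3 z + m * sp * (F3 z + G3 z)) ^ 2 := by
    intro z hz
    have : (0:ℝ) ≤ 1 / (12 * m * sp) := by positivity
    exact mul_nonneg (mul_nonneg this (pow_nonneg (hfpos z hz).le 3)) (sq_nonneg _)
  have hHnn : ∀ z ∈ Set.Icc a b, 0 ≤ H z := by
    intro z hz
    have := ht1 z hz; have := ht2 z hz; have := ht3 z hz; have := ht4 z hz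
    simp only [hHdef]
    linarith
  -- the integrand vanishes on [a,b]
  have hHzero : ∀ z ∈ Set.Icc a b, H z = 0 := zero_of_integral_zero hab hcH hHnn hD
  -- deduce the third derivatives vanish
  have hkey : ∀ z ∈ Set.Icc a b, F3 z = 0 ∧ G3 z = 0 := by
    intro z hz
    have h0 := hHzero z hz
    simp only [hHdef] at h0
    have h1 := ht1 z hz; have h2 := ht2 z hz; have h3 := ht3 z hz; have h4 := ht4 z hz
    have ht2z : (sp / (3 * mu)) * (g z) ^ 3 * (F3 z + G3 z) ^ 2 = 0 := by linarith
    have ht4z : (1 / (12 * m * sp)) * (f z) ^ 3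
        * (sm * F3 z + m * sp * (F3 z + G3 z)) ^ 2 = 0 := by linarith
    have hA : (0:ℝ) < (sp / (3 * mu)) * (g z) ^ 3 := by
      have := hgpos z hz; positivity
    have hB : (0:ℝ) < (1 / (12 * m * sp)) * (f z) ^ 3 := by
      have := hfpos z hz; positivity
    have hsum0 : F3 z + G3 z = 0 := by
      have hsq : (F3 z + G3 z) ^ 2 = 0 := by
        rcases mul_eq_zero.1 ht2z with h | h
        · exact absurd h hA.ne'
        · exact h
      exact pow_eq_zero_iff (two_ne_zero) |>.1 hsq
    have hlin0 : sm * F3 z + m * sp * (F3 z + G3 z) = 0 := by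
      have hsq : (sm * F3 z + m * sp * (F3 z + G3 z)) ^ 2 = 0 := by
        rcases mul_eq_zero.1 ht4z with h | h
        · exact absurd h hB.ne'
        · exact h
      exact pow_eq_zero_iff (two_ne_zero) |>.1 hsq
    have hF0 : F3 z = 0 := by
      rw [hsum0, mul_zero, add_zero] at hlin0
      exact (mul_eq_zero.1 hlin0).resolve_left hsm.ne'
    refine ⟨hF0, by linarith⟩
  have h3f : ∀ z ∈ Set.Icc a b, iteratedDerivWithin 3 f (Set.Icc a b) z = 0 :=
    fun z hz => (hkey z hz).1
  have h3g : ∀ z ∈ Set.Icc a b, iteratedDerivWithin 3 g (Set.Icc a b) z = 0 :=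
    fun z hz => (hkey z hz).2
  have hfc := flat_of_third_deriv_zero hab hf h3f hbfa hbfb
  have hgc := flat_of_third_deriv_zero hab hg h3g hbga hbgb
  intro x hx y hy
  exact ⟨(hfc x hx).trans (hfc y hy).symm, (hgc x hx).trans (hgc y hy).symm⟩
end
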